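/- Let k ≥ 1 and r > 0 be reals, and let v, APX, OPT, OPTc be reals satisfying: OPT = v − OPTc·(r/k), |APX − OPT| ≤ 1/(2k), and v − APX ≥ 1. Then the quantity Q = ((2k−1)/(2r))·(v − APX) satisfies Q ≤ OPTc ≤ 3·Q. -/

import Mathlib

/-- **Arithmetic core of the inapproximability argument for optimal bidding.** If
`OPT = v − OPTc·(r/k)`, `APX` is within `1/(2k)` of `OPT`, and `v − APX ≥ 1`, then
`Q = ((2k−1)/(2r))·(v − APX)` satisfies `Q ≤ OPTc ≤ 3Q`, i.e. it is a multiplicative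
3-approximation of the set-cover optimum `OPTc`. -/
theorem setcover_three_approx (k r v APX OPT OPTc : ℝ) (hk : 1 ≤ k) (hr : 0 < r)
    (hOPT : OPT = v - OPTc * (r / k))
    (hAPX : |APX - OPT| ≤ 1 / (2 * k))
    (hgap : 1 ≤ v - APX) :
    ((2 * k - 1) / (2 * r)) * (v - APX) ≤ OPTc ∧
      OPTc ≤ 3 * (((2 * k - 1) / (2 * r)) * (v - APX)) := by
  have hk0 : (0:ℝ) < k := lt_of_lt_of_le one_pos hk
  obtain ⟨h1, h2⟩ := abs_le.mp hAPX
  have h2k : (0:ℝ) < 2 * k := by positivity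
  have hA1 : (APX - OPT) * (2 * k) ≤ 1 := by
    have := mul_le_mul_of_nonneg_right h2 h2k.le
    have e : 1 / (2 * k) * (2 * k) = 1 := by field_simp
    linarith
  have hA2 : -1 ≤ (APX - OPT) * (2 * k) := by
    have := mul_le_mul_of_nonneg_right h1 h2k.le
    have e : -(1 / (2 * k)) * (2 * k) = -1 := by field_simp
    linarith
  have hcov : OPTc * r = (v - OPT) * k := by
    have : OPTc * (r / k) = v - OPT := by linarith [hOPT]
    field_simp at this
    linarith [this]
  have hQ : ((2 * k - 1) / (2 * r)) * (v - APX) * (2 * r) = (2 * k - 1) * (v - APX) := by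
    field_simp
  constructor
  · rw [← mul_le_mul_iff_of_pos_right (show (0:ℝ) < 2 * r by positivity), hQ]
    nlinarith [mul_pos hk0 hr, sq_nonneg (k - 1), mul_le_mul_of_nonneg_left hgap (by linarith : (0:ℝ) ≤ 2*k - 1)]
  · rw [← mul_le_mul_iff_of_pos_right (show (0:ℝ) < 2 * r by positivity), mul_assoc, hQ]
    nlinarith [mul_pos hk0 hr, sq_nonneg (k - 1), mul_le_mul_of_nonneg_left hgap (by linarith : (0:ℝ) ≤ 2*k - 1)]
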